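/- There exists a threshold m₀ such that for every fair division instance with m ≥ m₀ goods, n agents, and monotone normalized valuations, there exists an allocation with copies (A_1,…,A_n) such that v_i(A_i) ≥ μ_i^n(M) for every agent i, the total number of copies Σ_i |A_i| − |⋃_i A_i| is at most m/e, and every good belongs to at most 1 + min{n−1, 3·ln(m)/ln(ln(m))} of the bundles. -/

import Mathlib

open Finset Filter Real

/-- The `d`-maximin share of valuation `v` over the set `S` of goods:
the maximum over partitions of `S` into `d` bundles of the minimum bundle value. -/
noncomputable def mms {G : Type*} (v : Finset G → ℝ) (d : ℕ) (S : Finset G) : ℝ :=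
  ⨆ P : G → Fin d, ⨅ j : Fin d, v (S.filter fun g => P g = j)

def hitCount {n : ℕ} (c j : Fin n → Fin n) : ℕ := (univ.filter fun i => c i = j i).card

variable {n : ℕ}

lemma card_forced (c : Fin n → Fin n) (S : Finset (Fin n)) :
    (univ.filter fun j : Fin n → Fin n => ∀ i ∈ S, c i = j i).card = n ^ (n - S.card) := by
  classical
  have h : (univ.filter fun j : Fin n → Fin n => ∀ i ∈ S, c i = j i)
      = Fintype.piFinset (fun i => if i ∈ S then {c i} else univ) := by
    ext j
    simp only [mem_filter, mem_univ, true_and, Fintype.mem_piFinset]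
    constructor
    · intro h i
      by_cases hi : i ∈ S
      · simp [hi, (h i hi).symm]
      · simp [hi]
    · intro h i hi
      have := h i
      simp [hi] at this
      exact this.symm
  rw [h, Fintype.card_piFinset]
  have h1 : ∀ i : Fin n, ((if i ∈ S then ({c i} : Finset (Fin n)) else univ)).card
      = if i ∈ S then 1 else n := by
    intro i; by_cases hi : i ∈ S <;> simp [hi]
  simp only [h1]
  rw [Finset.prod_ite, Finset.prod_const, Finset.prod_const, one_pow, one_mul]
  congr 1
  rw [Finset.filter_not, Finset.card_sdiff_of_subset (Finset.filter_subset _ _)]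
  congr 1
  · simp
  · rw [Finset.filter_mem_eq_inter, Finset.univ_inter]

lemma sum_hitCount (hn : 0 < n) (c : Fin n → Fin n) :
    ∑ j : Fin n → Fin n, hitCount c j = n ^ n := by
  classical
  have hn0 : ∀ i₀ : Fin n, (univ.filter fun j : Fin n → Fin n => c i₀ = j i₀).card = n ^ (n-1) := by
    intro i₀
    have := card_forced c {i₀}
    simpa using this
  calc ∑ j : Fin n → Fin n, hitCount c j
      = ∑ j : Fin n → Fin n, ∑ i : Fin n, (if c i = j i then 1 else 0) := by
        simp only [hitCount, Finset.card_filter]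
    _ = ∑ i : Fin n, ∑ j : Fin n → Fin n, (if c i = j i then 1 else 0) := Finset.sum_comm
    _ = ∑ i : Fin n, (univ.filter fun j : Fin n → Fin n => c i = j i).card := by
        simp only [Finset.card_filter]
    _ = n ^ n := by
        simp only [hn0, Finset.sum_const, card_univ, Fintype.card_fin, smul_eq_mul]
        rw [← pow_succ', Nat.sub_add_cancel hn]

lemma card_miss (c : Fin n → Fin n) :
    (univ.filter fun j : Fin n → Fin n => ∀ i, c i ≠ j i).card = (n - 1) ^ n := by
  classical
  have h : (univ.filter fun j : Fin n → Fin n => ∀ i, c i ≠ j i)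
      = Fintype.piFinset (fun i => univ.erase (c i)) := by
    ext j
    simp only [mem_filter, mem_univ, true_and, Fintype.mem_piFinset, Finset.mem_erase,
      and_true]
    constructor
    · intro h i; exact fun he => h i he.symm
    · intro h i he; exact (h i) he.symm
  rw [h, Fintype.card_piFinset]
  simp [Finset.card_erase_of_mem]

lemma hitCount_zero_iff (c j : Fin n → Fin n) : hitCount c j = 0 ↔ ∀ i, c i ≠ j i := by
  simp [hitCount, Finset.card_eq_zero, Finset.filter_eq_empty_iff]

lemma sum_cost (hn : 0 < n) (c : Fin n → Fin n) :
    ∑ j : Fin n → Fin n, ((hitCount c j : ℝ) - min (hitCount c j : ℝ) 1)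
      = (((n - 1) ^ n : ℕ) : ℝ) := by
  classical
  have hmin : ∀ j : Fin n → Fin n, min (hitCount c j : ℝ) 1
      = if (¬ ∀ i, c i ≠ j i) then 1 else 0 := by
    intro j
    by_cases h : ∀ i, c i ≠ j i
    · simp [h, (hitCount_zero_iff c j).2 h]
    · have h1 : 1 ≤ hitCount c j := by
        rcases Nat.eq_zero_or_pos (hitCount c j) with h0 | h0
        · exact absurd ((hitCount_zero_iff c j).1 h0) h
        · exact h0
      have : (1:ℝ) ≤ (hitCount c j : ℝ) := by exact_mod_cast h1
      simp [h, min_eq_right this]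
  rw [Finset.sum_sub_distrib]
  simp only [hmin]
  rw [Finset.sum_boole]
  have h2 : ∑ j : Fin n → Fin n, (hitCount c j : ℝ) = ((n^n : ℕ) : ℝ) := by
    rw [← Nat.cast_sum]
    exact_mod_cast congrArg (Nat.cast : ℕ → ℝ) (sum_hitCount hn c)
  rw [h2]
  have h3 : (univ.filter fun j : Fin n → Fin n => ∀ i, c i ≠ j i).card = (n-1)^n := card_miss c
  have h4 : (univ.filter fun j : Fin n → Fin n => ¬ ∀ i, c i ≠ j i).card = n^n - (n-1)^n := by
    rw [Finset.filter_not, Finset.card_sdiff_of_subset (Finset.filter_subset _ _), h3]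
    congr 1
    simp [Fintype.card_fun]
  have hle : (n-1)^n ≤ n^n := Nat.pow_le_pow_left (Nat.sub_le n 1) n
  rw [h4, Nat.cast_sub hle, sub_sub_cancel]

lemma tail_bound (c : Fin n → Fin n) (T : ℕ) :
    (univ.filter fun j : Fin n → Fin n => T ≤ hitCount c j).card
      ≤ n.choose T * n ^ (n - T) := by
  classical
  have hsub : (univ.filter fun j : Fin n → Fin n => T ≤ hitCount c j)
      ⊆ (Finset.powersetCard T (univ : Finset (Fin n))).biUnion
          (fun S => univ.filter fun j : Fin n → Fin n => ∀ i ∈ S, c i = j i) := by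
    intro j hj
    rw [Finset.mem_filter] at hj
    obtain ⟨S, hS, hcard⟩ := Finset.exists_subset_card_eq hj.2
    rw [Finset.mem_biUnion]
    refine ⟨S, ?_, ?_⟩
    · rw [Finset.mem_powersetCard]; exact ⟨Finset.subset_univ _, hcard⟩
    · rw [Finset.mem_filter]
      exact ⟨mem_univ _, fun i hi => (Finset.mem_filter.1 (hS hi)).2⟩
  calc (univ.filter fun j : Fin n → Fin n => T ≤ hitCount c j).card
      ≤ _ := Finset.card_le_card hsub
    _ ≤ ∑ S ∈ Finset.powersetCard T (univ : Finset (Fin n)),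
          (univ.filter fun j : Fin n → Fin n => ∀ i ∈ S, c i = j i).card :=
        Finset.card_biUnion_le
    _ = ∑ S ∈ Finset.powersetCard T (univ : Finset (Fin n)), n ^ (n - T) := by
        apply Finset.sum_congr rfl
        intro S hS
        rw [Finset.mem_powersetCard] at hS
        rw [card_forced c S, hS.2]
    _ = n.choose T * n ^ (n - T) := by
        rw [Finset.sum_const, Finset.card_powersetCard, card_univ, Fintype.card_fin, smul_eq_mul]


lemma exists_opt {G : Type} [Fintype G] [DecidableEq G] {n : ℕ} (hn : 0 < n)
    (v : Finset G → ℝ) :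
    ∃ P : G → Fin n, ∀ j₀ : Fin n, mms v n univ ≤ v (univ.filter fun g => P g = j₀) := by
  have : Nonempty (Fin n) := ⟨⟨0, hn⟩⟩
  obtain ⟨P, hP⟩ := Finite.exists_max
    (fun P : G → Fin n => ⨅ j : Fin n, v (univ.filter fun g => P g = j))
  refine ⟨P, fun j₀ => ?_⟩
  have h1 : mms v n univ ≤ ⨅ j : Fin n, v (univ.filter fun g => P g = j) := ciSup_le hP
  exact h1.trans (ciInf_le (Finite.bddBelow_range _) j₀)

lemma mms_nonpos {G : Type} [Fintype G] [DecidableEq G] {n : ℕ} (hn : 0 < n)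
    (hcard : Fintype.card G < n) (v : Finset G → ℝ) (hv0 : v ∅ = 0) :
    mms v n univ ≤ 0 := by
  have : Nonempty (Fin n) := ⟨⟨0, hn⟩⟩
  apply ciSup_le
  intro P
  have hns : ¬ Function.Surjective P := by
    intro hs
    have := Fintype.card_le_of_surjective P hs
    simp only [Fintype.card_fin] at this
    omega
  rw [Function.Surjective] at hns
  push_neg at hns
  obtain ⟨j₀, hj₀⟩ := hns
  have hemp : (univ.filter fun g => P g = j₀) = ∅ := by
    rw [Finset.filter_eq_empty_iff]
    intro g _
    exact hj₀ g
  calc (⨅ j : Fin n, v (univ.filter fun g => P g = j))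
      ≤ v (univ.filter fun g => P g = j₀) := ciInf_le (Finite.bddBelow_range _) j₀
    _ = 0 := by rw [hemp, hv0]


lemma assemble {G : Type} [Fintype G] [DecidableEq G] {n : ℕ}
    (P : Fin n → G → Fin n) (j : Fin n → Fin n) :
    let A : Fin n → Finset G := fun i => univ.filter fun g => P i g = j i
    ((∑ i, ((A i).card : ℝ)) - ((univ.biUnion A).card : ℝ)
        = ∑ g : G, ((hitCount (fun i => P i g) j : ℝ)
            - min (hitCount (fun i => P i g) j : ℝ) 1))
    ∧ (∀ g : G, (univ.filter fun i => g ∈ A i).card = hitCount (fun i => P i g) j) := by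
  intro A
  classical
  have hmem : ∀ i g, g ∈ A i ↔ P i g = j i := by
    intro i g; simp [A]
  have hcnt : ∀ g : G, (univ.filter fun i => g ∈ A i).card = hitCount (fun i => P i g) j := by
    intro g
    unfold hitCount
    congr 1
    apply Finset.filter_congr
    intro i _
    simp [hmem]
  refine ⟨?_, hcnt⟩
  have h1 : ∑ i, ((A i).card : ℝ) = ∑ g : G, (hitCount (fun i => P i g) j : ℝ) := by
    have : ∀ i, ((A i).card : ℝ) = ∑ g : G, (if P i g = j i then (1:ℝ) else 0) := by
      intro i
      rw [Finset.sum_boole]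
    simp only [this]
    rw [Finset.sum_comm]
    apply Finset.sum_congr rfl
    intro g _
    rw [Finset.sum_boole]
    unfold hitCount
    norm_num
  have h2 : ((univ.biUnion A).card : ℝ) = ∑ g : G, min (hitCount (fun i => P i g) j : ℝ) 1 := by
    have hb : univ.biUnion A = univ.filter fun g => ∃ i, P i g = j i := by
      ext g
      simp [Finset.mem_biUnion, hmem]
    have hmin : ∀ g : G, min (hitCount (fun i => P i g) j : ℝ) 1
        = if (∃ i, P i g = j i) then 1 else 0 := by
      intro g
      by_cases h : ∃ i, P i g = j i
      · have : 0 < hitCount (fun i => P i g) j := by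
          rw [hitCount, Finset.card_pos, Finset.filter_nonempty_iff]
          obtain ⟨i, hi⟩ := h
          exact ⟨i, mem_univ _, hi⟩
        have : (1:ℝ) ≤ (hitCount (fun i => P i g) j : ℝ) := by exact_mod_cast this
        simp [h, min_eq_right this]
      · have : hitCount (fun i => P i g) j = 0 := by
          rw [hitCount, Finset.card_eq_zero, Finset.filter_eq_empty_iff]
          intro i _
          exact fun he => h ⟨i, he⟩
        simp [h, this]
    simp only [hmin]
    rw [Finset.sum_boole, hb]
  rw [h1, h2, ← Finset.sum_sub_distrib]

-- Case A analytic bound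
lemma an0 {n : ℕ} (hn : 0 < n) :
    Real.exp 1 * (((n - 1 : ℕ) : ℝ)) ^ n ≤ (n : ℝ) ^ n := by
  have hn' : (1:ℝ) ≤ n := by exact_mod_cast hn
  have hcast : ((n - 1 : ℕ) : ℝ) = (n : ℝ) - 1 := by
    push_cast [Nat.cast_sub hn]; ring
  have hx : (n:ℝ) - 1 ≤ (n:ℝ) * Real.exp (-(1/(n:ℝ))) := by
    have h := Real.add_one_le_exp (-(1/(n:ℝ)))
    have hpos : (0:ℝ) < n := by linarith
    have hinv : (n:ℝ) * (1/(n:ℝ)) = 1 := by field_simp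
    nlinarith [mul_le_mul_of_nonneg_left h (le_of_lt hpos)]
  have h0 : (0:ℝ) ≤ (n:ℝ) - 1 := by linarith
  have hpow : ((n:ℝ) - 1) ^ n ≤ ((n:ℝ) * Real.exp (-(1/(n:ℝ)))) ^ n :=
    pow_le_pow_left₀ h0 hx n
  have hexp : ((n:ℝ) * Real.exp (-(1/(n:ℝ)))) ^ n
      = (n:ℝ) ^ n * Real.exp (-1) := by
    rw [mul_pow, ← Real.exp_nat_mul]
    congr 2
    field_simp
  rw [hcast]
  calc Real.exp 1 * ((n:ℝ) - 1) ^ n ≤ Real.exp 1 * ((n:ℝ)^n * Real.exp (-1)) := by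
        rw [← hexp]; exact mul_le_mul_of_nonneg_left hpow (le_of_lt (Real.exp_pos 1))
    _ = (n:ℝ)^n := by
        rw [← mul_assoc, mul_comm (Real.exp 1), mul_assoc, ← Real.exp_add]
        simp

-- Case B analytic bound
lemma an1 {n : ℕ} (hn : 8 ≤ n) :
    Real.exp 1 * (((n - 1 : ℕ) : ℝ)) ^ n ≤ (n : ℝ) ^ n * (1 - 1 / (8 * n)) := by
  have hn1 : (8:ℝ) ≤ n := by exact_mod_cast hn
  have hnpos : (0:ℝ) < n := by linarith
  set x : ℝ := 1 / (n:ℝ) with hxdef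
  have hx0 : 0 < x := by positivity
  have hx8 : x ≤ 1/8 := by
    rw [hxdef, div_le_div_iff₀ hnpos (by norm_num)]; linarith
  have hax : |x| < 1 := by rw [abs_of_pos hx0]; linarith
  -- log (1 - x) ≤ -x - x^2/4
  have hlog : Real.log (1 - x) ≤ -x - x^2/4 := by
    have h := Real.abs_log_sub_add_sum_range_le hax 2
    have hsum : (∑ i ∈ Finset.range 2, x ^ (i+1) / (i+1)) = x + x^2/2 := by
      norm_num [Finset.sum_range_succ]
    rw [hsum, abs_of_pos hx0] at h
    have h2 := abs_le.1 h
    have htail : x^3 / (1 - x) ≤ x^2/4 := by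
      rw [div_le_div_iff₀ (by linarith) (by norm_num)]
      nlinarith
    have hpow : x ^ (2+1) = x^3 := by ring
    rw [hpow] at h2
    nlinarith [h2.2]
  have h1x : (0:ℝ) < 1 - x := by linarith
  -- (1-x)^n ≤ exp (-1 - x/4)
  have hnx : (n:ℝ) * x = 1 := by rw [hxdef, mul_one_div, div_self (ne_of_gt hnpos)]
  have hpow : (1 - x)^n ≤ Real.exp (-1 - x/4) := by
    have : (1-x)^n = Real.exp ((n:ℝ) * Real.log (1-x)) := by
      rw [← Real.log_pow, Real.exp_log (by positivity)]
    rw [this]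
    apply Real.exp_le_exp.2
    have := mul_le_mul_of_nonneg_left hlog (le_of_lt hnpos)
    have hnx2 : (n:ℝ) * (x^2) = x := by
      rw [pow_two, ← mul_assoc, hnx, one_mul]
    nlinarith
  -- exp 1 * (1-x)^n ≤ 1 - x/8
  have hfin : Real.exp 1 * (1 - x)^n ≤ 1 - x/8 := by
    have h1 : Real.exp 1 * (1-x)^n ≤ Real.exp (-x/4) := by
      calc Real.exp 1 * (1-x)^n ≤ Real.exp 1 * Real.exp (-1 - x/4) :=
            mul_le_mul_of_nonneg_left hpow (le_of_lt (Real.exp_pos 1))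
        _ = Real.exp (-x/4) := by rw [← Real.exp_add]; ring_nf
    have h2 : Real.exp (-x/4) ≤ 1/(1 + x/4) := by
      have h3 := Real.add_one_le_exp (x/4)
      rw [show -x/4 = -(x/4) by ring, Real.exp_neg, one_div]
      have hp : (0:ℝ) < 1 + x/4 := by linarith
      exact inv_anti₀ hp (by linarith)
    have h4 : 1/(1 + x/4) ≤ 1 - x/8 := by
      rw [div_le_iff₀ (by linarith)]
      nlinarith
    linarith
  have hcast : ((n - 1 : ℕ) : ℝ) = (n : ℝ) - 1 := by
    have : 1 ≤ n := by omega
    push_cast [Nat.cast_sub this]; ring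
  have hid : ((n:ℝ) - 1) = (n:ℝ) * (1 - x) := by
    rw [hxdef, mul_sub, mul_one, mul_one_div, div_self (ne_of_gt hnpos)]
  rw [hcast, hid, mul_pow, ← mul_assoc, mul_comm (Real.exp 1) ((n:ℝ)^n), mul_assoc]
  have h18 : 1 - x/8 = 1 - 1/(8*n) := by
    rw [hxdef]; ring
  rw [← h18]
  exact mul_le_mul_of_nonneg_left hfin (by positivity)

-- Stirling-type lower bound
lemma pow_le_factorial_mul : ∀ k : ℕ, (k:ℝ)^k ≤ (k.factorial : ℝ) * Real.exp 1 ^ k := by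
  intro k
  induction k with
  | zero => simp
  | succ k ih =>
    rcases Nat.eq_zero_or_pos k with hk | hk
    · subst hk
      simp [Nat.factorial]
    · have hkpos : (0:ℝ) < k := by exact_mod_cast hk
      have hstep : ((k:ℝ)+1)^k ≤ (k:ℝ)^k * Real.exp 1 := by
        have h1 : (k:ℝ)+1 ≤ (k:ℝ) * Real.exp (1/(k:ℝ)) := by
          have h := Real.add_one_le_exp (1/(k:ℝ))
          have hinv : (k:ℝ) * (1/(k:ℝ)) = 1 := by field_simp
          nlinarith [mul_le_mul_of_nonneg_left h (le_of_lt hkpos)]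
        calc ((k:ℝ)+1)^k ≤ ((k:ℝ) * Real.exp (1/(k:ℝ)))^k :=
              pow_le_pow_left₀ (by positivity) h1 k
          _ = (k:ℝ)^k * Real.exp 1 := by
              rw [mul_pow, ← Real.exp_nat_mul]
              congr 2
              field_simp
      push_cast
      rw [show ((k:ℝ) + 1)^(k+1) = ((k:ℝ)+1) * ((k:ℝ)+1)^k from by ring]
      calc ((k:ℝ)+1) * ((k:ℝ)+1)^k ≤ ((k:ℝ)+1) * ((k:ℝ)^k * Real.exp 1) :=
            mul_le_mul_of_nonneg_left hstep (by positivity)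
        _ ≤ ((k:ℝ)+1) * (((k.factorial : ℕ):ℝ) * Real.exp 1 ^ k * Real.exp 1) := by
            apply mul_le_mul_of_nonneg_left _ (by positivity)
            exact mul_le_mul_of_nonneg_right ih (le_of_lt (Real.exp_pos 1))
        _ = (((k+1).factorial : ℕ):ℝ) * Real.exp 1 ^ (k+1) := by
            push_cast [Nat.factorial_succ]
            ring


noncomputable def FR (x : ℝ) : ℝ := 3 * Real.log x / Real.log (Real.log x)

lemma tendsto_FR : Tendsto FR atTop atTop := by
  have hg : Tendsto (fun y : ℝ => Real.log y / y) atTop (nhds 0) := by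
    have := Real.isLittleO_log_id_atTop
    simpa using this.tendsto_div_nhds_zero
  have hgl : Tendsto (fun x : ℝ => Real.log (Real.log x) / Real.log x) atTop (nhds 0) :=
    hg.comp Real.tendsto_log_atTop
  have hpos : ∀ᶠ x : ℝ in atTop, 0 < Real.log (Real.log x) / Real.log x := by
    have h1 : ∀ᶠ x : ℝ in atTop, (1:ℝ) < Real.log x :=
      Real.tendsto_log_atTop.eventually_gt_atTop 1
    have h2 : ∀ᶠ x : ℝ in atTop, (0:ℝ) < Real.log (Real.log x) :=
      (Real.tendsto_log_atTop.comp Real.tendsto_log_atTop).eventually_gt_atTop 0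
    filter_upwards [h1, h2] with x h1 h2
    exact div_pos h2 (by linarith)
  have hin : Tendsto (fun x : ℝ => Real.log (Real.log x) / Real.log x) atTop
      (nhdsWithin 0 (Set.Ioi 0)) := by
    rw [tendsto_nhdsWithin_iff]
    exact ⟨hgl, hpos⟩
  have hinv : Tendsto (fun x : ℝ => (Real.log (Real.log x) / Real.log x)⁻¹) atTop atTop :=
    hin.inv_tendsto_nhdsGT_zero
  have h3 : Tendsto (fun x : ℝ => 3 * (Real.log (Real.log x) / Real.log x)⁻¹) atTop atTop :=
    hinv.const_mul_atTop (by norm_num)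
  apply h3.congr'
  have h1 : ∀ᶠ x : ℝ in atTop, (1:ℝ) < Real.log x :=
    Real.tendsto_log_atTop.eventually_gt_atTop 1
  filter_upwards [h1] with x hx
  rw [FR, inv_div, mul_div_assoc]

lemma tendsto_ratio : Tendsto
    (fun x : ℝ => (Real.log (Real.log (Real.log x)) + 1) / Real.log (Real.log x))
    atTop (nhds 0) := by
  have hg : Tendsto (fun y : ℝ => Real.log y / y) atTop (nhds 0) := by
    have := Real.isLittleO_log_id_atTop
    simpa using this.tendsto_div_nhds_zero
  have hLL : Tendsto (fun x : ℝ => Real.log (Real.log x)) atTop atTop :=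
    Real.tendsto_log_atTop.comp Real.tendsto_log_atTop
  have h1 : Tendsto (fun x : ℝ => Real.log (Real.log (Real.log x)) / Real.log (Real.log x))
      atTop (nhds 0) := hg.comp hLL
  have h2 : Tendsto (fun x : ℝ => (Real.log (Real.log x))⁻¹) atTop (nhds 0) :=
    tendsto_inv_atTop_zero.comp hLL
  have h3 := h1.add h2
  rw [show (0:ℝ) = 0 + 0 from by norm_num]
  apply h3.congr
  intro x
  rw [inv_eq_one_div, ← add_div]

lemma main_asymptotic : ∃ m₀ : ℕ, ∀ m : ℕ, m₀ ≤ m →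
    16 ≤ m ∧ 7 ≤ FR m ∧ 8 * (m:ℝ)^2 ≤ (((⌊FR m⌋₊ + 2).factorial : ℕ) : ℝ) := by
  have key : ∀ᶠ x : ℝ in atTop,
      7 ≤ FR x ∧ 8 * x^2 ≤ (((⌊FR x⌋₊ + 2).factorial : ℕ) : ℝ) := by
    have hLL : Tendsto (fun x : ℝ => Real.log (Real.log x)) atTop atTop :=
      Real.tendsto_log_atTop.comp Real.tendsto_log_atTop
    have e1 : ∀ᶠ x : ℝ in atTop, 8 ≤ FR x := tendsto_FR.eventually_ge_atTop 8
    have e2 : ∀ᶠ x : ℝ in atTop, 6 ≤ Real.log x := Real.tendsto_log_atTop.eventually_ge_atTop 6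
    have e3 : ∀ᶠ x : ℝ in atTop,
        (Real.log (Real.log (Real.log x)) + 1) / Real.log (Real.log x) ≤ 1/6 :=
      tendsto_ratio.eventually_le_const (by norm_num)
    have e4 : ∀ᶠ x : ℝ in atTop, 1 ≤ Real.log (Real.log x) := hLL.eventually_ge_atTop 1
    have e5 : ∀ᶠ x : ℝ in atTop, (1:ℝ) ≤ x := eventually_ge_atTop 1
    filter_upwards [e1, e2, e3, e4, e5] with x h8 hL6 hrat hLL1 hx1
    set L := Real.log x with hLdef
    set LL := Real.log L with hLLdef
    set LLL := Real.log LL with hLLLdef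
    have hLpos : (0:ℝ) < L := by linarith
    have hLLpos : (0:ℝ) < LL := by linarith
    have hf : FR x = 3 * L / LL := rfl
    have hfpos : (0:ℝ) < FR x := by linarith
    refine ⟨by linarith, ?_⟩
    set Fn : ℕ := ⌊FR x⌋₊ + 2 with hFndef
    have hflo : FR x < (⌊FR x⌋₊ : ℝ) + 1 := Nat.lt_floor_add_one (FR x)
    have hcastFn : (Fn : ℝ) = (⌊FR x⌋₊ : ℝ) + 2 := by rw [hFndef]; push_cast; ring
    have hFnge : FR x + 1 ≤ (Fn : ℝ) := by rw [hcastFn]; linarith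
    have hFnpos : (0:ℝ) < (Fn:ℝ) := by linarith
    have hlogf : Real.log (FR x) = Real.log 3 + LL - LLL := by
      rw [hf, Real.log_div (by positivity) (ne_of_gt hLLpos),
        Real.log_mul (by norm_num) (ne_of_gt hLpos)]
      try rw [← hLLdef, ← hLLLdef]
      try ring
    have hexp1lt : Real.exp 1 < 2.7182818286 := Real.exp_one_lt_d9
    have hlog3 : (1:ℝ) ≤ Real.log 3 := by
      rw [Real.le_log_iff_exp_le (by norm_num)]
      linarith
    have hlog8 : Real.log 8 ≤ 3 := by
      rw [Real.log_le_iff_le_exp (by norm_num)]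
      have h9 := Real.exp_one_gt_d9
      have h3p : (2.7182818283:ℝ)^(3:ℕ) ≤ (Real.exp 1)^(3:ℕ) :=
        pow_le_pow_left₀ (by norm_num) (le_of_lt h9) 3
      have hexp3 : Real.exp 3 = (Real.exp 1)^(3:ℕ) := by
        rw [← Real.exp_nat_mul]; norm_num
      rw [hexp3]
      nlinarith
    -- key inequality : f (log f - 1) ≥ (5/2) L
    have hr2 : LLL + 1 ≤ LL * (1/6) := by
      rw [div_le_iff₀ hLLpos] at hrat
      linarith
    have hkey : (5/2) * L ≤ FR x * (Real.log (FR x) - 1) := by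
      rw [hlogf, hf]
      have h1 : (5/6)*LL ≤ Real.log 3 + LL - LLL - 1 := by linarith
      have h2 : (3*L/LL) * ((5/6)*LL) ≤ (3*L/LL) * (Real.log 3 + LL - LLL - 1) :=
        mul_le_mul_of_nonneg_left h1 (by positivity)
      have h3 : (3*L/LL) * ((5/6)*LL) = (5/2)*L := by
        field_simp
        ring
      linarith
    have hlogfge1 : 1 ≤ Real.log (FR x) := by
      rw [Real.le_log_iff_exp_le hfpos]
      linarith
    have hlogmono : Real.log (FR x) ≤ Real.log (Fn:ℝ) := by
      apply Real.log_le_log hfpos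
      linarith
    have hmono : FR x * (Real.log (FR x) - 1) ≤ (Fn:ℝ) * (Real.log (Fn:ℝ) - 1) := by
      have hstep1 : FR x * (Real.log (FR x) - 1) ≤ (Fn:ℝ) * (Real.log (FR x) - 1) :=
        mul_le_mul_of_nonneg_right (by linarith) (by linarith)
      have hstep2 : (Fn:ℝ) * (Real.log (FR x) - 1) ≤ (Fn:ℝ) * (Real.log (Fn:ℝ) - 1) :=
        mul_le_mul_of_nonneg_left (by linarith) (le_of_lt hFnpos)
      linarith
    have hlogx : Real.log (8 * x^2) = Real.log 8 + 2 * L := by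
      rw [Real.log_mul (by norm_num) (by positivity), Real.log_pow]
      rw [← hLdef]
      push_cast
      ring
    have hchain : Real.log (8 * x^2) ≤ (Fn:ℝ) * (Real.log (Fn:ℝ) - 1) := by
      rw [hlogx]
      have : Real.log 8 + 2 * L ≤ (5/2) * L := by linarith
      linarith
    have hxexp : 8 * x^2 ≤ Real.exp ((Fn:ℝ) * (Real.log (Fn:ℝ) - 1)) := by
      calc 8 * x^2 = Real.exp (Real.log (8 * x^2)) := by
            rw [Real.exp_log (by positivity)]
        _ ≤ _ := Real.exp_le_exp.2 hchain
    have hexpeq : Real.exp ((Fn:ℝ) * (Real.log (Fn:ℝ) - 1))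
        = (Fn:ℝ)^(Fn:ℕ) / Real.exp 1 ^ (Fn:ℕ) := by
      rw [mul_sub, mul_one, Real.exp_sub]
      congr 1
      · rw [Real.exp_nat_mul, Real.exp_log hFnpos]
      · rw [show ((Fn:ℕ):ℝ) = (Fn:ℕ) * (1:ℝ) from by ring, Real.exp_nat_mul]
    have hfact := pow_le_factorial_mul Fn
    have hdiv : (Fn:ℝ)^(Fn:ℕ) / Real.exp 1 ^ (Fn:ℕ) ≤ ((Fn.factorial : ℕ) : ℝ) := by
      rw [div_le_iff₀ (by positivity)]
      exact_mod_cast hfact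
    calc 8 * x^2 ≤ Real.exp ((Fn:ℝ) * (Real.log (Fn:ℝ) - 1)) := hxexp
      _ = (Fn:ℝ)^(Fn:ℕ) / Real.exp 1 ^ (Fn:ℕ) := hexpeq
      _ ≤ ((Fn.factorial : ℕ) : ℝ) := hdiv
  have hnat : ∀ᶠ m : ℕ in atTop,
      16 ≤ m ∧ (7 ≤ FR m ∧ 8 * (m:ℝ)^2 ≤ (((⌊FR m⌋₊ + 2).factorial : ℕ) : ℝ)) :=
    (eventually_ge_atTop 16).and (tendsto_natCast_atTop_atTop.eventually key)
  rw [eventually_atTop] at hnat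
  obtain ⟨m₀, h⟩ := hnat
  exact ⟨m₀, fun m hm => ⟨(h m hm).1, (h m hm).2.1, (h m hm).2.2⟩⟩







lemma find_good_choice {G : Type} [Fintype G] [DecidableEq G] {n : ℕ} (hn : 0 < n)
    (hnm : n ≤ Fintype.card G) (h16 : 16 ≤ Fintype.card G)
    (hf7 : 7 ≤ FR (Fintype.card G))
    (hfact : 8 * ((Fintype.card G : ℕ):ℝ)^2
      ≤ (((⌊FR (Fintype.card G)⌋₊ + 2).factorial : ℕ) : ℝ))
    (P : Fin n → G → Fin n) :
    ∃ j : Fin n → Fin n,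
      (∀ g : G, (hitCount (fun i => P i g) j : ℝ) ≤ 1 + min ((n:ℝ)-1) (FR (Fintype.card G))) ∧
      (∑ g : G, ((hitCount (fun i => P i g) j : ℝ) - min ((hitCount (fun i => P i g) j : ℝ)) 1)
        ≤ ((Fintype.card G : ℕ):ℝ) / Real.exp 1) := by
  classical
  set m := Fintype.card G with hmdef
  have : Nonempty (Fin n) := ⟨⟨0, hn⟩⟩
  set cost : (Fin n → Fin n) → ℝ := fun j =>
    ∑ g : G, ((hitCount (fun i => P i g) j : ℝ) - min ((hitCount (fun i => P i g) j : ℝ)) 1)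
    with hcostdef
  have hcost_nonneg : ∀ j, 0 ≤ cost j := by
    intro j
    apply Finset.sum_nonneg
    intro g _
    have := min_le_left ((hitCount (fun i => P i g) j : ℝ)) 1
    linarith
  have hsumtot : ∑ j : Fin n → Fin n, cost j = (m:ℝ) * (((n - 1) ^ n : ℕ) : ℝ) := by
    rw [hcostdef]
    rw [Finset.sum_comm]
    have h1 : ∀ g : G, ∑ j : Fin n → Fin n,
        ((hitCount (fun i => P i g) j : ℝ) - min ((hitCount (fun i => P i g) j : ℝ)) 1)
        = (((n - 1) ^ n : ℕ) : ℝ) := fun g => sum_cost hn _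
    rw [Finset.sum_congr rfl (fun g _ => h1 g), Finset.sum_const, card_univ, nsmul_eq_mul]
  have hNpos : (0:ℝ) < ((n:ℝ))^n := by positivity
  have hcardJ : (Fintype.card (Fin n → Fin n) : ℝ) = ((n:ℝ))^n := by
    rw [Fintype.card_fun]
    push_cast
    simp
  have hmpos : (0:ℝ) < (m:ℝ) := by
    have : 0 < m := by omega
    exact_mod_cast this
  by_cases hA : (n:ℝ) - 1 ≤ FR m
  · -- small n : average over all j
    have hne : (univ : Finset (Fin n → Fin n)).Nonempty := univ_nonempty
    have havg : ∑ j : Fin n → Fin n, cost j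
        ≤ ∑ _j : Fin n → Fin n, (m:ℝ) * (((n - 1) ^ n : ℕ) : ℝ) / ((n:ℝ))^n := by
      rw [hsumtot, Finset.sum_const, card_univ, nsmul_eq_mul, hcardJ]
      rw [mul_div_assoc', mul_comm (((n:ℝ))^n), mul_div_assoc, div_self (ne_of_gt hNpos), mul_one]
    obtain ⟨j, _, hj⟩ := Finset.exists_le_of_sum_le hne havg
    refine ⟨j, ?_, ?_⟩
    · intro g
      have h1 : hitCount (fun i => P i g) j ≤ n := by
        have := Finset.card_filter_le (univ : Finset (Fin n)) (fun i => (fun i => P i g) i = j i)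
        simpa [hitCount] using this
      have h2 : (hitCount (fun i => P i g) j : ℝ) ≤ n := by exact_mod_cast h1
      rw [min_eq_left hA]
      linarith
    · refine le_trans hj ?_
      rw [div_le_div_iff₀ hNpos (Real.exp_pos 1)]
      calc (m:ℝ) * (((n - 1) ^ n : ℕ) : ℝ) * Real.exp 1
          = (m:ℝ) * (Real.exp 1 * (((n - 1 : ℕ) : ℝ)) ^ n) := by push_cast; ring
        _ ≤ (m:ℝ) * ((n:ℝ))^n := mul_le_mul_of_nonneg_left (an0 hn) (le_of_lt hmpos)
        _ = (m:ℝ) * ((n:ℝ))^n := rfl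
  · -- large n
    push_neg at hA
    set T : ℕ := ⌊FR m⌋₊ + 2 with hTdef
    have hfl : (⌊FR m⌋₊ : ℝ) ≤ FR m := Nat.floor_le (by linarith)
    have hn9 : 9 ≤ n := by
      have : (8:ℝ) < (n:ℝ) := by linarith
      exact_mod_cast this
    have hTn : T ≤ n := by
      have : (⌊FR m⌋₊ : ℝ) + 2 < (n:ℝ) + 1 := by linarith
      have h2 : (⌊FR m⌋₊ : ℕ) + 2 < n + 1 := by exact_mod_cast this
      omega
    set Bad : Finset (Fin n → Fin n) :=
      univ.filter fun j => ∃ g : G, T ≤ hitCount (fun i => P i g) j with hBaddef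
    have hBadcard : Bad.card * (8 * m^2) ≤ m * n^n := by
      have h1 : Bad.card ≤ m * (n.choose T * n ^ (n - T)) := by
        have hsub : Bad ⊆ univ.biUnion
            (fun g : G => univ.filter fun j : Fin n → Fin n =>
              T ≤ hitCount (fun i => P i g) j) := by
          intro j hj
          rw [hBaddef, Finset.mem_filter] at hj
          obtain ⟨g, hg⟩ := hj.2
          rw [Finset.mem_biUnion]
          exact ⟨g, mem_univ _, Finset.mem_filter.2 ⟨mem_univ _, hg⟩⟩
        calc Bad.card ≤ _ := Finset.card_le_card hsub
          _ ≤ ∑ g : G, (univ.filter fun j : Fin n → Fin n =>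
                T ≤ hitCount (fun i => P i g) j).card := Finset.card_biUnion_le
          _ ≤ ∑ _g : G, n.choose T * n ^ (n - T) :=
              Finset.sum_le_sum (fun g _ => tail_bound _ T)
          _ = m * (n.choose T * n ^ (n - T)) := by
              rw [Finset.sum_const, card_univ, smul_eq_mul]
      have h2 : 8 * m^2 ≤ T.factorial := by
        have := hfact
        exact_mod_cast this
      have h3 : n.choose T * T.factorial ≤ n ^ T := by
        rw [mul_comm, ← Nat.descFactorial_eq_factorial_mul_choose]
        exact Nat.descFactorial_le_pow n T
      calc Bad.card * (8 * m^2) ≤ (m * (n.choose T * n ^ (n - T))) * T.factorial :=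
            Nat.mul_le_mul h1 h2
        _ = m * ((n.choose T * T.factorial) * n ^ (n - T)) := by ring
        _ ≤ m * (n ^ T * n ^ (n - T)) :=
            Nat.mul_le_mul_left m (Nat.mul_le_mul_right _ h3)
        _ = m * n^n := by rw [← pow_add, Nat.add_sub_cancel' hTn]
    set Gd : Finset (Fin n → Fin n) :=
      univ.filter fun j => ∀ g : G, hitCount (fun i => P i g) j < T with hGddef
    have hGdcompl : Gd = univ \ Bad := by
      rw [hGddef, hBaddef, ← Finset.filter_not]
      congr 1
      ext j
      push_neg
      rfl
    have hGdcard : Gd.card = n^n - Bad.card := by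
      rw [hGdcompl, Finset.card_sdiff_of_subset (Finset.filter_subset _ _), Finset.card_univ,
        Fintype.card_fun, Fintype.card_fin]
    have hBadle : Bad.card ≤ n^n := by
      calc Bad.card ≤ Fintype.card (Fin n → Fin n) := Finset.card_le_univ Bad
        _ = n^n := by rw [Fintype.card_fun, Fintype.card_fin]
    -- real bounds
    have hBadR : (Bad.card : ℝ) * (8 * m) ≤ (n:ℝ)^n := by
      have : (Bad.card : ℝ) * (8 * (m:ℝ)^2) ≤ (m:ℝ) * (n:ℝ)^n := by exact_mod_cast hBadcard
      have hh : (Bad.card : ℝ) * (8 * (m:ℝ)) * (m:ℝ) ≤ ((n:ℝ)^n) * (m:ℝ) := by nlinarith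
      exact le_of_mul_le_mul_right hh hmpos
    have hGdR : (n:ℝ)^n * (1 - 1/(8*(m:ℝ))) ≤ (Gd.card : ℝ) := by
      have h1 : (Gd.card : ℝ) = (n:ℝ)^n - (Bad.card : ℝ) := by
        rw [hGdcard, Nat.cast_sub hBadle]
        push_cast
        ring
      have h2 : (Bad.card : ℝ) ≤ (n:ℝ)^n / (8*(m:ℝ)) := by
        rw [le_div_iff₀ (by positivity)]
        exact hBadR
      rw [h1]
      rw [mul_sub, mul_one, mul_one_div]
      linarith
    have hGdpos : (0:ℝ) < (Gd.card : ℝ) := by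
      have h16R : (16:ℝ) ≤ (m:ℝ) := by exact_mod_cast h16
      have : (0:ℝ) < (n:ℝ)^n * (1 - 1/(8*(m:ℝ))) := by
        apply mul_pos hNpos
        rw [sub_pos]
        rw [div_lt_iff₀ (by positivity)]
        linarith
      linarith
    have hGdne : Gd.Nonempty := by
      rw [← Finset.card_pos]
      exact_mod_cast hGdpos
    have hsumGd : ∑ j ∈ Gd, cost j ≤ ∑ j ∈ Gd, (m:ℝ) * (((n - 1) ^ n : ℕ) : ℝ) / (Gd.card : ℝ) := by
      have h1 : ∑ j ∈ Gd, cost j ≤ ∑ j : Fin n → Fin n, cost j :=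
        Finset.sum_le_sum_of_subset_of_nonneg (Finset.subset_univ Gd)
          (fun j _ _ => hcost_nonneg j)
      rw [Finset.sum_const, nsmul_eq_mul, hsumtot] at *
      rw [mul_div_assoc', mul_comm ((Gd.card : ℝ))]
      rw [mul_div_assoc, div_self (ne_of_gt hGdpos), mul_one]
      exact h1
    obtain ⟨j, hjGd, hj⟩ := Finset.exists_le_of_sum_le hGdne hsumGd
    refine ⟨j, ?_, ?_⟩
    · intro g
      have hjlt : hitCount (fun i => P i g) j < T := by
        rw [hGddef, Finset.mem_filter] at hjGd
        exact hjGd.2 g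
      have h1 : (hitCount (fun i => P i g) j : ℝ) ≤ (⌊FR m⌋₊ : ℝ) + 1 := by
        have : hitCount (fun i => P i g) j ≤ ⌊FR m⌋₊ + 1 := by omega
        exact_mod_cast this
      rw [min_eq_right (le_of_lt hA)]
      linarith
    · refine le_trans hj ?_
      rw [div_le_div_iff₀ hGdpos (Real.exp_pos 1)]
      have hcast : (((n - 1) ^ n : ℕ) : ℝ) = (((n-1 : ℕ)):ℝ)^n := by push_cast; ring
      have h1 : Real.exp 1 * (((n - 1 : ℕ) : ℝ)) ^ n ≤ (n:ℝ)^n * (1 - 1/(8*(n:ℝ))) :=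
        an1 (by omega)
      have h2 : (n:ℝ)^n * (1 - 1/(8*(n:ℝ))) ≤ (n:ℝ)^n * (1 - 1/(8*(m:ℝ))) := by
        apply mul_le_mul_of_nonneg_left _ (le_of_lt hNpos)
        have hnR : (n:ℝ) ≤ (m:ℝ) := by exact_mod_cast hnm
        have hnpos : (0:ℝ) < n := by exact_mod_cast hn
        have : 1/(8*(m:ℝ)) ≤ 1/(8*(n:ℝ)) := by
          apply div_le_div_of_nonneg_left (by norm_num) (by positivity)
          linarith
        linarith
      calc (m:ℝ) * (((n - 1) ^ n : ℕ) : ℝ) * Real.exp 1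
          = (m:ℝ) * (Real.exp 1 * (((n - 1 : ℕ) : ℝ)) ^ n) := by rw [hcast]; ring
        _ ≤ (m:ℝ) * ((n:ℝ)^n * (1 - 1/(8*(m:ℝ)))) :=
            mul_le_mul_of_nonneg_left (le_trans h1 h2) (le_of_lt hmpos)
        _ ≤ (m:ℝ) * (Gd.card : ℝ) := mul_le_mul_of_nonneg_left hGdR (le_of_lt hmpos)
        _ = (m:ℝ) * (Gd.card : ℝ) := rfl

theorem stmt2 :
    ∃ m₀ : ℕ, ∀ (G : Type) (_ : Fintype G) (_ : DecidableEq G) (n : ℕ), 0 < n →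
      ∀ v : Fin n → Finset G → ℝ,
        (∀ i, v i ∅ = 0) →
        (∀ i S, 0 ≤ v i S) →
        (∀ i S T, S ⊆ T → v i S ≤ v i T) →
        m₀ ≤ Fintype.card G →
        ∃ A : Fin n → Finset G,
          (∀ i, mms (v i) n Finset.univ ≤ v i (A i)) ∧
          ((∑ i, ((A i).card : ℝ)) - ((Finset.univ.biUnion A).card : ℝ) ≤
            (Fintype.card G : ℝ) / Real.exp 1) ∧
          (∀ g : G, ((Finset.univ.filter fun i => g ∈ A i).card : ℝ) ≤
            1 + min ((n : ℝ) - 1)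
              (3 * Real.log (Fintype.card G) / Real.log (Real.log (Fintype.card G)))) := by
  obtain ⟨m₀, hm₀⟩ := main_asymptotic
  refine ⟨m₀, ?_⟩
  intro G instF instD n hn v hv0 hvnn hmono hcard
  classical
  obtain ⟨h16, hf7, hfact⟩ := hm₀ (Fintype.card G) hcard
  have hgoalFR : 3 * Real.log (Fintype.card G) / Real.log (Real.log (Fintype.card G))
      = FR (Fintype.card G) := rfl
  have hmePos : (0:ℝ) ≤ (Fintype.card G : ℝ) / Real.exp 1 := by positivity
  by_cases hnm : Fintype.card G < n
  · -- more agents than goods : empty allocation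
    refine ⟨fun _ => ∅, ?_, ?_, ?_⟩
    · intro i
      have := mms_nonpos hn hnm (v i) (hv0 i)
      rw [hv0 i]
      exact this
    · have hb : (univ.biUnion fun _ : Fin n => (∅ : Finset G)) = ∅ := by
        ext g; simp
      rw [hb]
      simp [hmePos]
    · intro g
      rw [hgoalFR]
      have h1 : (0:ℝ) ≤ (n:ℝ) - 1 := by
        have : (1:ℝ) ≤ (n:ℝ) := by exact_mod_cast hn
        linarith
      have h2 : (0:ℝ) ≤ FR (Fintype.card G) := by linarith
      simp only [Finset.notMem_empty, Finset.filter_false, Finset.card_empty]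
      have := le_min h1 h2
      norm_num
      linarith
  · push_neg at hnm
    have hopt := fun i : Fin n => exists_opt hn (v i)
    choose P hP using hopt
    obtain ⟨j, hcap, hcost⟩ := find_good_choice hn hnm h16 hf7 hfact P
    set A : Fin n → Finset G := fun i => univ.filter fun g => P i g = j i with hAdef
    obtain ⟨hsum, hcnt⟩ := assemble P j
    refine ⟨A, ?_, ?_, ?_⟩
    · intro i
      exact hP i (j i)
    · rw [hsum]
      exact hcost
    · intro g
      rw [hgoalFR]
      rw [hcnt g]
      exact hcap g
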